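/- Under the stated assumptions, for any vector x ∈ ℝⁿ, the vectors Ŷ = Ŵ⁻¹V'M_F x and β* = (F'F)⁻¹F'(x − VŶ) solve Henderson's mixed model equations for the FDSLRM, i.e. F'Fβ* + F'VŶ = F'x and V'Fβ* + Ĝ_V Ŷ = V'x, where Ĝ_V = V'V + σ₀²D⁻¹. -/

import Mathlib

open Matrix

lemma aux_mulVec_inj_of_rank {m N : Type*} [Fintype m] [Fintype N]
    (A : Matrix m N ℝ) (h : A.rank = Fintype.card N) :
    Function.Injective A.mulVec := by
  have h1 := A.mulVecLin.finrank_range_add_finrank_ker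
  rw [Matrix.rank] at h
  rw [h, Module.finrank_pi] at h1
  have hker : Module.finrank ℝ (LinearMap.ker A.mulVecLin) = 0 := by omega
  have hbot : LinearMap.ker A.mulVecLin = ⊥ := Submodule.finrank_eq_zero.mp hker
  have hinj := LinearMap.ker_eq_bot.mp hbot
  intro a b hab
  exact hinj (by simpa [Matrix.mulVecLin_apply] using hab)

/-- The vectors `Ŷ = Ŵ⁻¹V'M_F x` and `β* = (F'F)⁻¹F'(x − VŶ)` solve Henderson's
mixed model equations `F'Fβ* + F'VŶ = F'x` and `V'Fβ* + Ĝ_V Ŷ = V'x`. -/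
theorem stmt_4 {n k l : ℕ} (hn : 0 < n) (hk : 0 < k) (hl : 0 < l)
    (hnkl : k + l < n)
    (F : Matrix (Fin n) (Fin k) ℝ) (V : Matrix (Fin n) (Fin l) ℝ)
    (hrank : (Matrix.fromCols F V).rank = k + l)
    (σ0 : ℝ) (hσ0 : 0 < σ0)
    (σ : Fin l → ℝ) (hσ : ∀ j, 0 < σ j)
    (D : Matrix (Fin l) (Fin l) ℝ) (hD : D = Matrix.diagonal σ)
    (Mf : Matrix (Fin n) (Fin n) ℝ) (hMf : Mf = 1 - F * (Fᵀ * F)⁻¹ * Fᵀ)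
    (What : Matrix (Fin l) (Fin l) ℝ) (hWhat : What = Vᵀ * Mf * V + σ0 • D⁻¹)
    (GV : Matrix (Fin l) (Fin l) ℝ) (hGV : GV = Vᵀ * V + σ0 • D⁻¹)
    (x : Fin n → ℝ)
    (Yhat : Fin l → ℝ) (hYhat : Yhat = (What⁻¹ * Vᵀ * Mf).mulVec x)
    (βstar : Fin k → ℝ)
    (hβstar : βstar = ((Fᵀ * F)⁻¹ * Fᵀ).mulVec (x - V.mulVec Yhat)) :
    (Fᵀ * F).mulVec βstar + (Fᵀ * V).mulVec Yhat = Fᵀ.mulVec x ∧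
    (Vᵀ * F).mulVec βstar + GV.mulVec Yhat = Vᵀ.mulVec x := by
  -- injectivity of `F`
  have hinjFV : Function.Injective (Matrix.fromCols F V).mulVec :=
    aux_mulVec_inj_of_rank _ (by simpa using hrank)
  have hinjF : Function.Injective F.mulVec := by
    intro a b hab
    have h2 : (Matrix.fromCols F V).mulVec (Sum.elim a 0) =
        (Matrix.fromCols F V).mulVec (Sum.elim b 0) := by
      rw [fromCols_mulVec_sumElim, fromCols_mulVec_sumElim, mulVec_zero, hab]
    have h3 := hinjFV h2
    funext i
    exact congrFun h3 (Sum.inl i)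
  -- `FᵀF` is positive definite, hence invertible
  have hApd : (Fᵀ * F).PosDef := by
    refine posDef_iff_dotProduct_mulVec.mpr
      ⟨by simpa using isHermitian_conjTranspose_mul_self F, fun v hv => ?_⟩
    have hFv : F *ᵥ v ≠ 0 := fun h => hv (hinjF (by rw [h, mulVec_zero]))
    have hsv : star v = v := by simp
    have heq : star v ⬝ᵥ ((Fᵀ * F) *ᵥ v) = (F *ᵥ v) ⬝ᵥ (F *ᵥ v) := by
      rw [hsv, ← mulVec_mulVec, dotProduct_mulVec, vecMul_transpose]
    rw [heq]
    refine lt_of_le_of_ne ?_ (Ne.symm fun h => hFv (dotProduct_self_eq_zero.mp h))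
    exact Finset.sum_nonneg fun i _ => mul_self_nonneg _
  have hAdet : IsUnit (Fᵀ * F).det := (isUnit_iff_isUnit_det _).mp hApd.isUnit
  have hA1 : (Fᵀ * F) * (Fᵀ * F)⁻¹ = 1 := mul_nonsing_inv _ hAdet
  have hA2 : (Fᵀ * F)⁻¹ * (Fᵀ * F) = 1 := nonsing_inv_mul _ hAdet
  -- properties of `Mf`
  have hAT : (Fᵀ * F)ᵀ = Fᵀ * F := by rw [transpose_mul, transpose_transpose]
  have hMfT : Mfᵀ = Mf := by
    rw [hMf]
    simp only [transpose_sub, transpose_one, transpose_mul, transpose_transpose,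
      transpose_nonsing_inv, hAT, Matrix.mul_assoc]
  have hP : F * (Fᵀ * F)⁻¹ * Fᵀ * (F * (Fᵀ * F)⁻¹ * Fᵀ) = F * (Fᵀ * F)⁻¹ * Fᵀ := by
    calc F * (Fᵀ * F)⁻¹ * Fᵀ * (F * (Fᵀ * F)⁻¹ * Fᵀ)
        = F * ((Fᵀ * F)⁻¹ * (Fᵀ * F)) * ((Fᵀ * F)⁻¹ * Fᵀ) := by
          simp only [Matrix.mul_assoc]
      _ = F * ((Fᵀ * F)⁻¹ * Fᵀ) := by rw [hA2, Matrix.mul_one]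
      _ = F * (Fᵀ * F)⁻¹ * Fᵀ := (Matrix.mul_assoc _ _ _).symm
  have hMfMf : Mf * Mf = Mf := by
    rw [hMf, Matrix.sub_mul, Matrix.one_mul, Matrix.mul_sub, Matrix.mul_one, hP]
    abel
  -- `Ŵ` is positive definite, hence invertible
  have hPSD : (Vᵀ * Mf * V).PosSemidef := by
    have heq : Vᵀ * Mf * V = (Mf * V)ᵀ * (Mf * V) := by
      rw [transpose_mul, hMfT,
        show Vᵀ * Mf * (Mf * V) = Vᵀ * (Mf * Mf) * V by simp only [Matrix.mul_assoc], hMfMf]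
    rw [heq]
    simpa using posSemidef_conjTranspose_mul_self (Mf * V)
  have hDinv : D⁻¹ = Matrix.diagonal (fun j => (σ j)⁻¹) := by
    rw [hD]
    apply inv_eq_right_inv
    have h1 : (fun i => σ i * (σ i)⁻¹) = fun _ => (1 : ℝ) :=
      funext fun j => mul_inv_cancel₀ (hσ j).ne'
    rw [diagonal_mul_diagonal, h1, diagonal_one]
  have hDpd : (σ0 • D⁻¹).PosDef := by
    rw [hDinv, ← diagonal_smul]
    refine Matrix.PosDef.diagonal fun j => ?_
    have hj : (σ0 • fun j => (σ j)⁻¹) j = σ0 * (σ j)⁻¹ := rfl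
    rw [hj]
    exact mul_pos hσ0 (inv_pos.mpr (hσ j))
  have hWpd : What.PosDef := hWhat ▸ Matrix.PosDef.posSemidef_add hPSD hDpd
  have hWdet : IsUnit What.det := (isUnit_iff_isUnit_det _).mp hWpd.isUnit
  have hW1 : What * What⁻¹ = 1 := mul_nonsing_inv _ hWdet
  -- projection identity
  have hproj : F * (Fᵀ * F)⁻¹ * Fᵀ = 1 - Mf := by rw [hMf, sub_sub_cancel]
  -- key fact: `Ŵ Ŷ = Vᵀ Mf x`
  have hWY : (Vᵀ * Mf * V) *ᵥ Yhat + (σ0 • D⁻¹) *ᵥ Yhat = (Vᵀ * Mf) *ᵥ x := by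
    rw [← add_mulVec, ← hWhat, hYhat, mulVec_mulVec,
      show What * (What⁻¹ * Vᵀ * Mf) = What * What⁻¹ * (Vᵀ * Mf) by
        simp only [Matrix.mul_assoc],
      hW1, Matrix.one_mul]
  constructor
  · rw [hβstar, mulVec_mulVec,
      show Fᵀ * F * ((Fᵀ * F)⁻¹ * Fᵀ) = Fᵀ * F * (Fᵀ * F)⁻¹ * Fᵀ from
        (Matrix.mul_assoc _ _ _).symm,
      hA1, Matrix.one_mul, mulVec_sub, mulVec_mulVec]
    abel
  · have hc : Vᵀ * F * ((Fᵀ * F)⁻¹ * Fᵀ) = Vᵀ - Vᵀ * Mf := by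
      rw [show Vᵀ * F * ((Fᵀ * F)⁻¹ * Fᵀ) = Vᵀ * (F * (Fᵀ * F)⁻¹ * Fᵀ) by
        simp only [Matrix.mul_assoc], hproj, Matrix.mul_sub, Matrix.mul_one]
    rw [hβstar, mulVec_mulVec, hc, hGV, sub_mulVec, mulVec_sub, mulVec_sub, add_mulVec]
    simp only [mulVec_mulVec]
    linear_combination hWY
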